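/- Let X be a unital C*-algebra and x a positive element. For every δ > 0 there exists a positive invertible element z ∈ C*(x, 1) with ‖z − x‖ < δ. Consequently, if the squaring-type map α_{n+1} : (X_sa)^{n+1} → X_+, (x_1,...,x_{n+1}) ↦ ∑ x_k², is open, then X has real rank at most n. -/
import Mathlib

/-- (1) For a positive element `x` of a unital C*-algebra and `δ > 0` there exists a positive
invertible `z ∈ C*(x,1)` with `‖z - x‖ < δ`. (2) Consequently, if the squaring map
`α_{n+1} : (X_sa)^{n+1} → X₊`, `(x_k) ↦ ∑ x_k²`, is open (in the ε-δ sense below), then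
`X` has real rank at most `n`. -/
theorem stmt_14 {X : Type*} [CStarAlgebra X] [PartialOrder X] [StarOrderedRing X] (n : ℕ) :
    (∀ x : X, 0 ≤ x → ∀ δ : ℝ, 0 < δ →
      ∃ z : X, z ∈ StarAlgebra.elemental ℂ x ∧ 0 ≤ z ∧ IsUnit z ∧ ‖z - x‖ < δ) ∧
    ((∀ x : Fin (n + 1) → X, (∀ k, IsSelfAdjoint (x k)) → ∀ ε : ℝ, 0 < ε →
        ∃ δ : ℝ, 0 < δ ∧ ∀ y : X, 0 ≤ y → ‖y - ∑ k, (x k) ^ 2‖ < δ →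
          ∃ y' : Fin (n + 1) → X, (∀ k, IsSelfAdjoint (y' k)) ∧
            (∑ k, (y' k) ^ 2) = y ∧ ∀ k, ‖y' k - x k‖ < ε) →
      ∀ x : Fin (n + 1) → X, (∀ k, IsSelfAdjoint (x k)) → ∀ ε : ℝ, 0 < ε →
        ∃ y : Fin (n + 1) → X, (∀ k, IsSelfAdjoint (y k)) ∧
          IsUnit (∑ k, (y k) ^ 2) ∧ ∀ k, ‖x k - y k‖ < ε) := by
  have part1 : ∀ x : X, 0 ≤ x → ∀ δ : ℝ, 0 < δ →
      ∃ z : X, z ∈ StarAlgebra.elemental ℂ x ∧ 0 ≤ z ∧ IsUnit z ∧ ‖z - x‖ < δ := by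
    intro x hx δ hδ
    set c : ℝ := δ / 2 with hc
    have hcpos : 0 < c := by positivity
    refine ⟨x + algebraMap ℝ X c, ?_, ?_, ?_, ?_⟩
    · refine add_mem (StarAlgebra.elemental.self_mem ℂ x) ?_
      have : algebraMap ℝ X c = algebraMap ℂ X ((c : ℂ)) := by
        rw [IsScalarTower.algebraMap_apply ℝ ℂ X, Complex.coe_algebraMap]
      rw [this]
      exact (StarAlgebra.elemental ℂ x).algebraMap_mem _
    · refine add_nonneg hx ?_
      have : algebraMap ℝ X c = star (algebraMap ℝ X (Real.sqrt c)) *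
          algebraMap ℝ X (Real.sqrt c) := by
        rw [← algebraMap_star_comm, star_trivial, ← map_mul,
          Real.mul_self_sqrt hcpos.le]
      rw [this]
      exact star_mul_self_nonneg _
    · have hspec : (-c) ∉ spectrum ℝ x := fun h =>
        absurd (spectrum_nonneg_of_nonneg hx h) (by linarith)
      have hu : IsUnit (algebraMap ℝ X (-c) - x) := spectrum.notMem_iff.mp hspec
      have := hu.neg
      rwa [neg_sub, map_neg, sub_neg_eq_add] at this
    · rw [add_sub_cancel_left]
      rcases subsingleton_or_nontrivial X with hX | hX
      · simpa [Subsingleton.elim (algebraMap ℝ X c) 0] using hδ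
      · have : ‖algebraMap ℝ X c‖ = ‖c‖ * ‖(1 : X)‖ := by
          rw [Algebra.algebraMap_eq_smul_one, norm_smul]
        rw [this, norm_one, mul_one, Real.norm_of_nonneg hcpos.le]
        linarith
  refine ⟨part1, ?_⟩
  intro h x hx ε hε
  obtain ⟨δ, hδ, hδ'⟩ := h x hx ε hε
  have hs : 0 ≤ ∑ k, (x k) ^ 2 := by
    refine Finset.sum_nonneg fun k _ => ?_
    have := star_mul_self_nonneg (x k)
    rwa [(hx k).star_eq, ← sq] at this
  obtain ⟨z, -, hz0, hzu, hzx⟩ := part1 _ hs δ hδ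
  obtain ⟨y', hy'sa, hy'sum, hy'close⟩ := hδ' z hz0 hzx
  exact ⟨y', hy'sa, hy'sum ▸ hzu, fun k => by rw [norm_sub_rev]; exact hy'close k⟩
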